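/- Let p = 4, ω ≡ 1, α = −2^{1/3}, λ = (1+2^{1/3})³, f = (1, −2^{1/3}, 1). The Hessian (1/4)∇²_f L of the cut-triangle Lagrangian at this point has first row and first column zero, and its lower-right 2×2 block is −3(1+2^{1/3})²·[[2^{−1/3}, 1],[1, 2^{1/3}]], which has determinant 0; hence the Hessian has rank 1 and the eigenpair is not regular. -/

import Mathlib

/-- The matrix `(1/4)∇²_f L` for the cut triangle (`p = 4`, `ω ≡ 1`). -/
noncomputable def cutHess (α lam fu fv fw : ℝ) : Matrix (Fin 3) (Fin 3) ℝ :=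
  !![3 * (1 - α) ^ 3 * fu ^ 2 + 3 * (fu - fw) ^ 2 - 3 * lam * fu ^ 2, 0,
        -3 * (fu - fw) ^ 2;
     0, 3 * (1 - 1 / α) ^ 3 * fv ^ 2 + 3 * (fv - fw) ^ 2 - 3 * lam * fv ^ 2,
        -3 * (fv - fw) ^ 2;
     -3 * (fw - fu) ^ 2, -3 * (fw - fv) ^ 2,
        3 * (fw - fu) ^ 2 + 3 * (fw - fv) ^ 2 - 3 * lam * fw ^ 2]

/-- at `α = -2^{1/3}`, `λ = (1+2^{1/3})³`, `f = (1, -2^{1/3}, 1)`,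
the cut-triangle Hessian has zero first row and column, its lower-right 2×2
block is `-3(1+2^{1/3})²·[[2^{-1/3}, 1],[1, 2^{1/3}]]` with determinant `0`;
the Hessian has rank `1` and the eigenpair is not regular. -/
theorem stmt14 (c α lam fu fv fw : ℝ)
    (hc : c = (2 : ℝ) ^ ((1 : ℝ) / 3))
    (hα : α = -c) (hlam : lam = (1 + c) ^ 3)
    (hfu : fu = 1) (hfv : fv = -c) (hfw : fw = 1) :
    (∀ j, cutHess α lam fu fv fw 0 j = 0) ∧
    (∀ i, cutHess α lam fu fv fw i 0 = 0) ∧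
    cutHess α lam fu fv fw 1 1 = -3 * (1 + c) ^ 2 * c⁻¹ ∧
    cutHess α lam fu fv fw 1 2 = -3 * (1 + c) ^ 2 ∧
    cutHess α lam fu fv fw 2 1 = -3 * (1 + c) ^ 2 ∧
    cutHess α lam fu fv fw 2 2 = -3 * (1 + c) ^ 2 * c ∧
    cutHess α lam fu fv fw 1 1 * cutHess α lam fu fv fw 2 2
      - cutHess α lam fu fv fw 1 2 * cutHess α lam fu fv fw 2 1 = 0 ∧
    (cutHess α lam fu fv fw).rank = 1 := by
  have hc0 : (0 : ℝ) < c := by rw [hc]; positivity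
  have hcne : c ≠ 0 := ne_of_gt hc0
  have hc3 : c ^ 3 = 2 := by
    rw [hc, ← Real.rpow_natCast ((2:ℝ) ^ ((1:ℝ)/3)) 3, ← Real.rpow_mul (by norm_num)]
    norm_num
  subst hα hlam hfu hfv hfw
  have e00 : cutHess (-c) ((1+c)^3) 1 (-c) 1 0 0 = 0 := by simp [cutHess]
  have e01 : cutHess (-c) ((1+c)^3) 1 (-c) 1 0 1 = 0 := by simp [cutHess]
  have e02 : cutHess (-c) ((1+c)^3) 1 (-c) 1 0 2 = 0 := by simp [cutHess]
  have e10 : cutHess (-c) ((1+c)^3) 1 (-c) 1 1 0 = 0 := by simp [cutHess]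
  have e20 : cutHess (-c) ((1+c)^3) 1 (-c) 1 2 0 = 0 := by
    simp [cutHess, Matrix.vecHead, Matrix.vecTail]
  have e11 : cutHess (-c) ((1+c)^3) 1 (-c) 1 1 1 = -3 * (1 + c) ^ 2 * c⁻¹ := by
    simp only [cutHess, Matrix.cons_val_one, Matrix.head_cons, Matrix.of_apply,
      Matrix.cons_val', Matrix.empty_val', Matrix.cons_val_fin_one, Matrix.cons_val_zero]
    rw [show (1 : ℝ) - 1/(-c) = (c+1)/c by
      field_simp; linear_combination, div_pow]
    field_simp
    linear_combination (-c^3 - 3*c^2 - 3*c - 1) * hc3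
  have e12 : cutHess (-c) ((1+c)^3) 1 (-c) 1 1 2 = -3 * (1 + c) ^ 2 := by
    simp [cutHess]; ring
  have e21 : cutHess (-c) ((1+c)^3) 1 (-c) 1 2 1 = -3 * (1 + c) ^ 2 := by
    simp [cutHess, Matrix.vecHead, Matrix.vecTail]
  have e22 : cutHess (-c) ((1+c)^3) 1 (-c) 1 2 2 = -3 * (1 + c) ^ 2 * c := by
    simp [cutHess, Matrix.vecHead, Matrix.vecTail]; ring
  refine ⟨?_, ?_, e11, e12, e21, e22, ?_, ?_⟩
  · intro j; fin_cases j
    · exact e00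
    · exact e01
    · exact e02
  · intro i; fin_cases i
    · exact e00
    · exact e10
    · exact e20
  · rw [e11, e12, e21, e22]
    field_simp
    ring
  · -- rank = 1
    set M : Matrix (Fin 3) (Fin 3) ℝ := cutHess (-c) ((1+c)^3) 1 (-c) 1 with hM
    set A : Matrix (Fin 3) (Fin 1) ℝ := !![0; 1; c] with hA
    set B : Matrix (Fin 1) (Fin 3) ℝ := !![0, -3 * (1 + c) ^ 2 * c⁻¹, -3 * (1 + c) ^ 2]
      with hB
    have hfac : M = A * B := by
      have hmul : ∀ i j, (A * B) i j = A i 0 * B 0 j := fun i j => by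
        simp [Matrix.mul_apply, Fin.sum_univ_one]
      ext i j
      rw [hmul]
      fin_cases i <;> fin_cases j
      · show M 0 0 = A 0 0 * B 0 0
        rw [e00]; simp [hA, hB]
      · show M 0 1 = A 0 0 * B 0 1
        rw [e01]; simp [hA, hB]
      · show M 0 2 = A 0 0 * B 0 2
        rw [e02]; simp [hA, hB]
      · show M 1 0 = A 1 0 * B 0 0
        rw [e10]; simp [hA, hB]
      · show M 1 1 = A 1 0 * B 0 1
        rw [e11]; simp [hA, hB]
      · show M 1 2 = A 1 0 * B 0 2
        rw [e12]; simp [hA, hB]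
      · show M 2 0 = A 2 0 * B 0 0
        rw [e20]; simp [hA, hB]
      · show M 2 1 = A 2 0 * B 0 1
        rw [e21]; simp [hA, hB]
        field_simp
      · show M 2 2 = A 2 0 * B 0 2
        rw [e22]; simp [hA, hB]
        ring
    have hle : M.rank ≤ 1 := by
      rw [hfac]
      calc (A * B).rank ≤ A.rank := Matrix.rank_mul_le_left A B
        _ ≤ Fintype.card (Fin 1) := Matrix.rank_le_card_width A
        _ = 1 := by simp
    have hne1c : (-3 : ℝ) * (1 + c) ^ 2 ≠ 0 := by
      have h1 : (0 : ℝ) < (1 + c) ^ 2 := by positivity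
      nlinarith
    have hvne : M.mulVecLin ![0, 1, 0] ≠ 0 := by
      intro h
      have h2 := congrFun h 2
      simp only [Matrix.mulVecLin_apply, Matrix.mulVec, dotProduct,
        Fin.sum_univ_three, Pi.zero_apply] at h2
      rw [e20, e21, e22] at h2
      simp at h2
      exact hne1c (by linarith)
    have hpos : 0 < M.rank := by
      rw [Matrix.rank]
      have : Nontrivial (LinearMap.range M.mulVecLin) :=
        nontrivial_of_ne ⟨M.mulVecLin ![0, 1, 0], LinearMap.mem_range_self _ _⟩ 0
          (by simpa [Submodule.mk_eq_zero] using hvne)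
      exact Module.finrank_pos
    omega
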